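/- For M < π², every function u ∈ C²([0,1]) with u(0)=u(1)=0 and u''(t) + M u(t) ≥ 0 for all t ∈ [0,1] satisfies u(t) ≤ 0 on [0,1]. (Inverse negativity of u'' + M u with Dirichlet conditions for M < π².) -/

import Mathlib

open Real Set Filter Topology

/-- Second derivative test at an interior local maximum: if `f` has derivative `f'` near `x`,
`f'` has derivative `a` at `x`, and `x` is a local max of `f`, then `a ≤ 0`. -/
lemma second_deriv_test_max (f f' : ℝ → ℝ) (a x : ℝ)
    (hf : ∀ᶠ t in 𝓝 x, HasDerivAt f (f' t) t)
    (hf' : HasDerivAt f' a x) (hmax : IsLocalMax f x) : a ≤ 0 := by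
  by_contra hcon
  push_neg at hcon
  have hfx : f' x = 0 := hmax.hasDerivAt_eq_zero hf.self_of_nhds
  -- f' is positive just to the right of x
  have hslope : Tendsto (slope f' x) (𝓝[≠] x) (𝓝 a) :=
    hasDerivAt_iff_tendsto_slope.1 hf'
  have hpos : ∀ᶠ t in 𝓝[≠] x, 0 < slope f' x t :=
    hslope.eventually (eventually_gt_nhds hcon)
  have hposr : ∀ᶠ t in 𝓝[>] x, 0 < f' t := by
    filter_upwards [nhdsWithin_mono x (fun t (ht : t ∈ Ioi x) => ne_of_gt ht) hpos,
      self_mem_nhdsWithin] with t ht htx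
    have hx : (0:ℝ) < t - x := by simp at htx; linarith
    have : 0 < (f' t - f' x) / (t - x) := by simpa [slope_def_field, div_eq_iff] using ht
    have := mul_pos this hx
    rw [div_mul_cancel₀ _ (ne_of_gt hx)] at this
    linarith
  have hfr : ∀ᶠ t in 𝓝[>] x, HasDerivAt f (f' t) t := nhdsWithin_le_nhds hf
  have hmr : ∀ᶠ t in 𝓝[>] x, f t ≤ f x := nhdsWithin_le_nhds hmax
  have hall : {t | 0 < f' t ∧ HasDerivAt f (f' t) t ∧ f t ≤ f x} ∈ 𝓝[>] x :=
    hposr.and (hfr.and hmr)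
  obtain ⟨b, hxb, hsub⟩ := mem_nhdsGT_iff_exists_Ioo_subset.1 hall
  have hxb' : x < b := hxb
  -- strict monotonicity on [x, m] where m := (x+b)/2
  set m := (x + b) / 2 with hm
  have hxm : x < m := by rw [hm]; linarith
  have hmb : m < b := by rw [hm]; linarith
  have hcont : ContinuousOn f (Icc x m) := by
    intro t ht
    rcases eq_or_lt_of_le ht.1 with h | h
    · subst h
      exact (hf.self_of_nhds.continuousAt).continuousWithinAt
    · exact ((hsub ⟨h, lt_of_le_of_lt ht.2 hmb⟩).2.1.continuousAt).continuousWithinAt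
  have hmono : StrictMonoOn f (Icc x m) := by
    apply strictMonoOn_of_deriv_pos (convex_Icc x m) hcont
    intro t ht
    rw [interior_Icc] at ht
    have htb := hsub ⟨ht.1, lt_trans ht.2 hmb⟩
    rw [htb.2.1.deriv]
    exact htb.1
  have h1 : f x < f m := hmono (left_mem_Icc.2 (le_of_lt hxm)) (right_mem_Icc.2 hxm.le) hxm
  have h2 : f m ≤ f x := (hsub ⟨hxm, hmb⟩).2.2
  linarith

set_option maxHeartbeats 1000000 in
/-- Inverse negativity of `u'' + M u` with Dirichlet conditions for `M < π²`. -/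
theorem stmt_13 (M : ℝ) (hM : M < π ^ 2) (u : ℝ → ℝ)
    (hu : ContDiffOn ℝ 2 u (Icc 0 1)) (h0 : u 0 = 0) (h1 : u 1 = 0)
    (hpos : ∀ t ∈ Icc (0 : ℝ) 1, 0 ≤ iteratedDerivWithin 2 u (Icc 0 1) t + M * u t) :
    ∀ t ∈ Icc (0 : ℝ) 1, u t ≤ 0 := by
  by_contra hcon
  push_neg at hcon
  obtain ⟨s, hsI, hus⟩ := hcon
  -- choose μ with max(M,0) < μ² and μ < π, and a shift δ
  have hpi : (0:ℝ) < π := Real.pi_pos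
  set r := Real.sqrt (max M 0) with hr
  have hr0 : 0 ≤ r := Real.sqrt_nonneg _
  have hrlt : r < π := by
    have : max M 0 < π ^ 2 := max_lt hM (by positivity)
    have := Real.sqrt_lt_sqrt (le_max_right M 0) this
    rwa [show π ^ 2 = π * π by ring, Real.sqrt_mul_self hpi.le] at this
  set μ := (r + π) / 2 with hμ
  have hμ0 : 0 < μ := by simp [hμ]; linarith
  have hrμ : r < μ := by simp [hμ]; linarith
  have hμπ : μ < π := by simp [hμ]; linarith
  have hMμ : M < μ ^ 2 := by
    have h1 : max M 0 = r ^ 2 := (Real.sq_sqrt (le_max_right M 0)).symm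
    have h2 : r ^ 2 < μ ^ 2 := by nlinarith
    calc M ≤ max M 0 := le_max_left _ _
    _ = r ^ 2 := h1
    _ < μ ^ 2 := h2
  set δ := (π - μ) / 2 with hδ
  have hδ0 : 0 < δ := by simp [hδ]; linarith
  have hμδ : μ + δ < π := by simp [hδ]; linarith
  set φ : ℝ → ℝ := fun t => Real.sin (μ * t + δ) with hφ
  have harg : ∀ t ∈ Icc (0:ℝ) 1, 0 < μ * t + δ ∧ μ * t + δ < π := by
    intro t ht
    constructor
    · nlinarith [ht.1]
    · nlinarith [ht.2]
  have hφpos : ∀ t ∈ Icc (0:ℝ) 1, 0 < φ t := by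
    intro t ht
    exact Real.sin_pos_of_pos_of_lt_pi (harg t ht).1 (harg t ht).2
  set φ' : ℝ → ℝ := fun t => μ * Real.cos (μ * t + δ) with hφ'
  set φ'' : ℝ → ℝ := fun t => -(μ ^ 2) * Real.sin (μ * t + δ) with hφ''
  have hargd : ∀ t : ℝ, HasDerivAt (fun t => μ * t + δ) μ t := by
    intro t
    simpa using ((hasDerivAt_id t).const_mul μ).add_const δ
  have hφd : ∀ t : ℝ, HasDerivAt φ (φ' t) t := by
    intro t
    have := (Real.hasDerivAt_sin (μ * t + δ)).comp t (hargd t)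
    simpa [hφ, hφ', mul_comm, Function.comp_def] using this
  have hφd2 : ∀ t : ℝ, HasDerivAt φ' (φ'' t) t := by
    intro t
    have := ((Real.hasDerivAt_cos (μ * t + δ)).comp t (hargd t)).const_mul μ
    rw [show φ'' t = μ * (-Real.sin (μ * t + δ) * μ) by show -(μ ^ 2) * Real.sin (μ * t + δ) = _; ring]
    exact this
  -- continuity and maximum of w = u / φ
  have hφc : Continuous φ := by
    apply Real.continuous_sin.comp
    continuity
  set w : ℝ → ℝ := fun t => u t / φ t with hw
  have hwc : ContinuousOn w (Icc 0 1) := by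
    apply (hu.continuousOn).div hφc.continuousOn
    intro t ht
    exact ne_of_gt (hφpos t ht)
  obtain ⟨t0, ht0I, hmax⟩ := isCompact_Icc.exists_isMaxOn ⟨s, hsI⟩ hwc
  set c := w t0 with hc
  have hcpos : 0 < c := lt_of_lt_of_le (div_pos hus (hφpos s hsI)) (hmax hsI)
  have ht0Ioo : t0 ∈ Ioo (0:ℝ) 1 := by
    rcases eq_or_lt_of_le ht0I.1 with h | h
    · exfalso; rw [hc, hw] at hcpos; simp [← h, h0] at hcpos
    rcases eq_or_lt_of_le ht0I.2 with h2 | h2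
    · exfalso; rw [hc, hw] at hcpos; simp [h2, h1] at hcpos
    exact ⟨h, h2⟩
  have hIn : ∀ t ∈ Ioo (0:ℝ) 1, Icc (0:ℝ) 1 ∈ 𝓝 t := fun t ht => Icc_mem_nhds ht.1 ht.2
  -- ψ = u - c φ has interior local max 0 at t0
  set ψ : ℝ → ℝ := fun t => u t - c * φ t with hψ
  have hψt0 : ψ t0 = 0 := by
    have hφt0 : φ t0 ≠ 0 := ne_of_gt (hφpos t0 ht0I)
    rw [hψ]; simp only [hc, hw]; field_simp; ring
  have hψle : ∀ t ∈ Icc (0:ℝ) 1, ψ t ≤ 0 := by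
    intro t ht
    have : u t / φ t ≤ c := hmax ht
    rw [div_le_iff₀ (hφpos t ht)] at this
    simp [hψ]; linarith [this]
  have hlocmax : IsLocalMax ψ t0 := by
    filter_upwards [hIn t0 ht0Ioo] with t ht
    rw [hψt0]; exact hψle t ht
  -- derivatives of u within Icc vs genuine derivatives on the interior
  set f1 := derivWithin u (Icc (0:ℝ) 1) with hf1
  have uI : UniqueDiffOn ℝ (Icc (0:ℝ) 1) := uniqueDiffOn_Icc one_pos
  have hudiff : DifferentiableOn ℝ u (Icc (0:ℝ) 1) := hu.differentiableOn (by norm_num)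
  have hud : ∀ t ∈ Ioo (0:ℝ) 1, HasDerivAt u (f1 t) t := by
    intro t ht
    have hda : DifferentiableAt ℝ u t := hudiff.differentiableAt (hIn t ht)
    have := hda.hasDerivAt
    rwa [hf1, derivWithin_of_mem_nhds (hIn t ht)]
  have hf1cd : ContDiffOn ℝ 1 f1 (Icc (0:ℝ) 1) := hu.derivWithin uI (by norm_num)
  have hf1diff : DifferentiableOn ℝ f1 (Icc (0:ℝ) 1) := hf1cd.differentiableOn one_ne_zero
  have hf1d : HasDerivAt f1 (iteratedDerivWithin 2 u (Icc 0 1) t0) t0 := by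
    have hda : DifferentiableAt ℝ f1 t0 := hf1diff.differentiableAt (hIn t0 ht0Ioo)
    have hgoal : iteratedDerivWithin 2 u (Icc 0 1) t0 = deriv f1 t0 := by
      rw [show (2:ℕ) = 1 + 1 from rfl, iteratedDerivWithin_succ]
      rw [← derivWithin_of_mem_nhds (hIn t0 ht0Ioo)]
      apply derivWithin_congr
      · intro t ht; exact congrFun iteratedDerivWithin_one t
      · exact congrFun iteratedDerivWithin_one t0
    rw [hgoal]
    exact hda.hasDerivAt
  -- apply the second derivative test to ψ
  set ψ' : ℝ → ℝ := fun t => f1 t - c * φ' t with hψ'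
  have hψd : ∀ᶠ t in 𝓝 t0, HasDerivAt ψ (ψ' t) t := by
    filter_upwards [Ioo_mem_nhds ht0Ioo.1 ht0Ioo.2] with t ht
    exact (hud t ht).sub ((hφd t).const_mul c)
  have hψd2 : HasDerivAt ψ' (iteratedDerivWithin 2 u (Icc 0 1) t0 - c * φ'' t0) t0 :=
    hf1d.sub ((hφd2 t0).const_mul c)
  have hkey : iteratedDerivWithin 2 u (Icc 0 1) t0 - c * φ'' t0 ≤ 0 :=
    second_deriv_test_max ψ ψ' _ t0 hψd hψd2 hlocmax
  -- contradiction
  have hut0 : u t0 = c * φ t0 := by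
    have := hψt0; rw [hψ] at this; simp at this; linarith
  have hφt0 : 0 < φ t0 := hφpos t0 ht0I
  have hp := hpos t0 ht0I
  rw [hut0] at hp
  rw [hφ''] at hkey
  have hφval : φ'' t0 = -(μ^2) * φ t0 := rfl
  nlinarith [mul_pos hcpos hφt0]
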